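/- One-step total-variation bound for Hedge: let θ ∈ Δ_n be a probability vector, let λ ∈ ℝ^n satisfy λ_i ∈ [0, B] for all i, let η > 0, and define the updated probability vector θ'_i = θ_i·exp(η λ_i) / Σ_{j=1}^n θ_j·exp(η λ_j). Then ‖θ' − θ‖₁ = Σ_{i=1}^n |θ'_i − θ_i| ≤ η·B. -/

import Mathlib

open Finset

lemma hedge_aux_key (x : ℝ) (hx : 0 ≤ x) : 2 * (Real.exp x - 1) ≤ x * (Real.exp x + 1) := by
  set f : ℝ → ℝ := fun t => t * Real.exp t + t - 2 * Real.exp t + 2 with hf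
  have hd : ∀ t : ℝ, HasDerivAt f (1 * Real.exp t + t * Real.exp t + 1 - 2 * Real.exp t) t := by
    intro t
    exact ((((hasDerivAt_id t).mul (Real.hasDerivAt_exp t)).add (hasDerivAt_id t)).sub
      ((Real.hasDerivAt_exp t).const_mul 2)).add_const 2
  have hmono : Monotone f := by
    apply monotone_of_deriv_nonneg (fun t => (hd t).differentiableAt)
    intro t
    rw [(hd t).deriv]
    have h1 : -t + 1 ≤ Real.exp (-t) := Real.add_one_le_exp (-t)
    have h2 : Real.exp (-t) * Real.exp t = 1 := by
      rw [← Real.exp_add]; simp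
    nlinarith [Real.exp_pos t]
  have h0 : f 0 = 0 := by simp [hf]
  have := hmono hx
  rw [h0] at this
  simp only [hf] at this
  nlinarith

/-- **One-step total-variation bound for Hedge.**
If `θ ∈ Δ_n`, `λ i ∈ [0,B]`, `η > 0`, and `θ' i = θ i · exp(η λ i) / Σ_j θ j · exp(η λ j)`,
then `‖θ' − θ‖₁ ≤ η·B`. -/
theorem hedge_one_step_tv_bound
    (n : ℕ) (B η : ℝ) (hη : 0 < η)
    (θ : Fin n → ℝ) (hθ : θ ∈ stdSimplex ℝ (Fin n))
    (lam : Fin n → ℝ) (hlam : ∀ i, lam i ∈ Set.Icc 0 B)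
    (θ' : Fin n → ℝ)
    (hθ' : ∀ i, θ' i = θ i * Real.exp (η * lam i) / ∑ j, θ j * Real.exp (η * lam j)) :
    ∑ i, |θ' i - θ i| ≤ η * B := by
  have hθ0 : ∀ i, 0 ≤ θ i := fun i => hθ.1 i
  have hsum : ∑ i, θ i = 1 := hθ.2
  rcases Nat.eq_zero_or_pos n with hn | hn
  · subst hn; simp at hsum
  have hB : 0 ≤ B := le_trans (hlam ⟨0, hn⟩).1 (hlam ⟨0, hn⟩).2
  have hxB : 0 ≤ η * B := mul_nonneg hη.le hB
  set a : Fin n → ℝ := fun i => Real.exp (η * lam i) with ha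
  set Z : ℝ := ∑ j, θ j * a j with hZdef
  set M : ℝ := Real.exp (η * B) with hM
  have ha1 : ∀ i, 1 ≤ a i := fun i => Real.one_le_exp (mul_nonneg hη.le (hlam i).1)
  have haM : ∀ i, a i ≤ M := fun i =>
    Real.exp_le_exp.2 (mul_le_mul_of_nonneg_left (hlam i).2 hη.le)
  have hZ1 : 1 ≤ Z := by
    rw [hZdef, ← hsum]
    exact Finset.sum_le_sum fun j _ => by nlinarith [hθ0 j, ha1 j]
  have hZpos : 0 < Z := lt_of_lt_of_le one_pos hZ1
  have hZM : Z ≤ M := by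
    calc Z ≤ ∑ j, θ j * M :=
          Finset.sum_le_sum fun j _ => mul_le_mul_of_nonneg_left (haM j) (hθ0 j)
    _ = M := by rw [← Finset.sum_mul, hsum, one_mul]
  have hM1 : 1 ≤ M := le_trans hZ1 hZM
  have key : 2 * (M - 1) ≤ (η * B) * (M + 1) := by
    have := hedge_aux_key (η * B) hxB
    rw [← hM] at this
    linarith
  have hθ'sum : ∑ i, θ' i = 1 := by
    have : ∑ i, θ' i = (∑ i, θ i * a i) / Z := by
      rw [Finset.sum_div]
      exact Finset.sum_congr rfl fun i _ => hθ' i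
    rw [this, ← hZdef, div_self (ne_of_gt hZpos)]
  have hdiff : ∀ i, θ' i - θ i = θ i * (a i - Z) / Z := by
    intro i
    rw [hθ']
    simp only [ha]
    field_simp
  set P : ℝ := ∑ i, max (θ' i - θ i) 0 with hP
  set N : ℝ := ∑ i, max (θ i - θ' i) 0 with hN
  have hPN : P = N := by
    have h0 : P - N = ∑ i, (θ' i - θ i) := by
      rw [hP, hN, ← Finset.sum_sub_distrib]
      refine Finset.sum_congr rfl fun i _ => ?_
      rcases le_total (θ' i) (θ i) with h | h
      · rw [max_eq_right (by linarith), max_eq_left (by linarith)]; ring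
      · rw [max_eq_left (by linarith), max_eq_right (by linarith)]; ring
    have h1 : ∑ i, (θ' i - θ i) = 0 := by
      rw [Finset.sum_sub_distrib, hθ'sum, hsum]; ring
    linarith [h0.trans h1]
  have habs : ∑ i, |θ' i - θ i| = P + N := by
    rw [hP, hN, ← Finset.sum_add_distrib]
    refine Finset.sum_congr rfl fun i _ => ?_
    rcases le_total (θ' i) (θ i) with h | h
    · rw [abs_of_nonpos (by linarith), max_eq_right (by linarith),
        max_eq_left (by linarith)]; ring
    · rw [abs_of_nonneg (by linarith), max_eq_left (by linarith),
        max_eq_right (by linarith)]; ring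
  have hPbound : P ≤ (M - Z) / Z := by
    have : P ≤ ∑ i, θ i * (M - Z) / Z := by
      refine Finset.sum_le_sum fun i _ => ?_
      have hstep : θ' i - θ i ≤ θ i * (M - Z) / Z := by
        rw [hdiff i]
        exact div_le_div_of_nonneg_right (by nlinarith [hθ0 i, haM i]) hZpos.le
      exact max_le hstep
        (div_nonneg (mul_nonneg (hθ0 i) (by linarith)) hZpos.le)
    calc P ≤ ∑ i, θ i * (M - Z) / Z := this
      _ = (M - Z) / Z := by
        rw [← Finset.sum_div, ← Finset.sum_mul, hsum, one_mul]
  have hNbound : N ≤ (Z - 1) / Z := by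
    have : N ≤ ∑ i, θ i * (Z - 1) / Z := by
      refine Finset.sum_le_sum fun i _ => ?_
      have hstep : θ i - θ' i ≤ θ i * (Z - 1) / Z := by
        have h2 : θ i - θ' i = θ i * (Z - a i) / Z := by
          rw [hθ']; simp only [ha]; field_simp
        rw [h2]
        exact div_le_div_of_nonneg_right (by nlinarith [hθ0 i, ha1 i]) hZpos.le
      exact max_le hstep
        (div_nonneg (mul_nonneg (hθ0 i) (by linarith)) hZpos.le)
    calc N ≤ ∑ i, θ i * (Z - 1) / Z := this
      _ = (Z - 1) / Z := by
        rw [← Finset.sum_div, ← Finset.sum_mul, hsum, one_mul]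
  rw [habs]
  by_cases hc2 : 2 ≤ η * B
  · -- trivial: P + N ≤ 2
    have hθ'0 : ∀ i, 0 ≤ θ' i := by
      intro i; rw [hθ']
      exact div_nonneg (mul_nonneg (hθ0 i) (Real.exp_pos _).le) hZpos.le
    have hPle : P ≤ 1 := by
      rw [hP, ← hθ'sum]
      exact Finset.sum_le_sum fun i _ => max_le (by linarith [hθ0 i]) (hθ'0 i)
    have hNle : N ≤ 1 := by
      rw [hN, ← hsum]
      exact Finset.sum_le_sum fun i _ => max_le (by linarith [hθ'0 i]) (hθ0 i)
    linarith
  · push_neg at hc2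
    by_cases hc : Z ≤ (M + 1) / 2
    · -- P + N = 2 N ≤ 2 (Z-1)/Z ≤ ηB
      have h1 : 2 * ((Z - 1) / Z) ≤ η * B := by
        rw [mul_div_assoc'] at *
        rw [div_le_iff₀ hZpos]
        nlinarith [mul_nonneg hxB (sub_nonneg.2 hZ1),
          mul_nonneg (sub_nonneg.2 hc) (by linarith : (0:ℝ) ≤ 2 - η * B)]
      calc P + N = 2 * N := by rw [hPN]; ring
        _ ≤ 2 * ((Z - 1) / Z) := by linarith [hNbound]
        _ ≤ η * B := h1
    · push_neg at hc
      have h1 : 2 * ((M - Z) / Z) ≤ η * B := by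
        rw [mul_div_assoc'] at *
        rw [div_le_iff₀ hZpos]
        nlinarith [mul_nonneg (sub_nonneg.2 hc.le) (by linarith : (0:ℝ) ≤ η * B + 2)]
      calc P + N = 2 * P := by rw [hPN]; ring
        _ ≤ 2 * ((M - Z) / Z) := by linarith [hPbound]
        _ ≤ η * B := h1
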